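/- arXiv:1605.00619 — 4 statements merged into one kernel-verified Lean document; each statement's English description precedes it below -/
import Mathlib

section
/- For even N and k ≤ N/2, the number of 2-to-1 functions f : [N] → [N] satisfying f(i_1)=y_1, ..., f(i_k)=y_k, where i_1 < ... < i_k are distinct indices and y_1, ..., y_k are distinct values, equals C(N−k, N/2−k) · C(N−k, k) · k! · (N−2k)!/2^(N/2−k). -/
/-- A function `f : Fin N → Fin N` is 2-to-1 if every element of its image
has exactly two preimages. -/
def TwoToOne {N : ℕ} (f : Fin N → Fin N) : Prop :=
  ∀ y : Fin N, (∃ x, f x = y) → (Finset.univ.filter fun x => f x = y).card = 2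

open Function

theorem card_constrained_equiv {α β : Type*} [Fintype α] [Fintype β]
    {k : ℕ} {u : Fin k → α} {v : Fin k → β} (hu : Injective u) (hv : Injective v)
    (hcard : Fintype.card α = Fintype.card β) :
    Nat.card {e : α ≃ β // ∀ j, e (u j) = v j} = (Fintype.card α - k).factorial := by
  classical
  set e0 : ↥(Set.range u) ≃ ↥(Set.range v) :=
    (Equiv.ofInjective u hu).symm.trans (Equiv.ofInjective v hv) with he0
  have he0app : ∀ (j : Fin k) (h : u j ∈ Set.range u), e0 ⟨u j, h⟩ = ⟨v j, ⟨j, rfl⟩⟩ := by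
    intro j h
    have h1 : (Equiv.ofInjective u hu).symm ⟨u j, h⟩ = j := by
      rw [Equiv.symm_apply_eq]
      exact Subtype.ext rfl
    simp only [he0, Equiv.trans_apply, h1]
    exact Subtype.ext rfl
  have h1 : {e : α ≃ β // ∀ j, e (u j) = v j} ≃
      {e : α ≃ β // ∀ x : Set.range u, e x = e0 x} := by
    apply Equiv.subtypeEquivRight
    intro e
    constructor
    · rintro h ⟨x, j, rfl⟩
      rw [he0app j ⟨j, rfl⟩]
      exact h j
    · intro h j
      have := h ⟨u j, ⟨j, rfl⟩⟩
      rw [he0app j ⟨j, rfl⟩] at this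
      exact this
  rw [Nat.card_congr (h1.trans (Equiv.Set.compl e0)), Nat.card_eq_fintype_card]
  have hcu : Fintype.card ↥(Set.range u) = k := by
    rw [Set.card_range_of_injective hu, Fintype.card_fin]
  have hcv : Fintype.card ↥(Set.range v) = k := by
    rw [Set.card_range_of_injective hv, Fintype.card_fin]
  have hc1 : Fintype.card ↥((Set.range u)ᶜ) = Fintype.card α - k := by
    rw [Fintype.card_compl_set, hcu]
  have hc2 : Fintype.card ↥((Set.range v)ᶜ) = Fintype.card β - k := by
    rw [Fintype.card_compl_set, hcv]
  rw [Fintype.card_equiv (Fintype.equivOfCardEq (by rw [hc1, hc2, hcard])), hc1]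

def fiberEquivBool {α β : Type*} (F : α → β) :
    {w : α ≃ β × Bool // ∀ x, (w x).1 = F x} ≃ ∀ z : β, ({x // F x = z} ≃ Bool) where
  toFun w z :=
    { toFun := fun x => (w.1 x.1).2
      invFun := fun b => ⟨w.1.symm (z, b), by
        have h := w.2 (w.1.symm (z, b))
        rw [Equiv.apply_symm_apply] at h
        exact h.symm⟩
      left_inv := fun x => by
        apply Subtype.ext
        have h1 : ((z, (w.1 x.1).2) : β × Bool) = w.1 x.1 := by
          have h2 : (w.1 x.1).1 = z := by rw [w.2 x.1, x.2]
          exact Prod.ext h2.symm rfl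
        simp only [h1, Equiv.symm_apply_apply]
      right_inv := fun b => by simp }
  invFun h := ⟨(Equiv.sigmaFiberEquiv F).symm.trans
      ((Equiv.sigmaCongrRight h).trans (Equiv.sigmaEquivProd β Bool)), fun x => rfl⟩
  left_inv := by
    rintro ⟨w, hw⟩
    apply Subtype.ext
    apply Equiv.ext
    intro x
    show (F x, (w x).2) = w x
    rw [← hw x]
  right_inv := by
    intro h
    funext z
    apply Equiv.ext
    rintro ⟨x, hx⟩
    subst hx
    rfl

def splitSecond {γ β : Type*} {k : ℕ} (t : γ → Fin k → β × Bool) (v : Fin k → β) :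
    {w : γ // ∀ j, (t w j).1 = v j} ≃ Σ c : Fin k → Bool, {w : γ // ∀ j, t w j = (v j, c j)} where
  toFun w := ⟨fun j => (t w.1 j).2, w.1, fun j => by rw [← w.2 j]⟩
  invFun p := ⟨p.2.1, fun j => by rw [p.2.2 j]⟩
  left_inv w := rfl
  right_inv := by
    rintro ⟨c, w, hw⟩
    have hc : (fun j => (t w j).2) = c := funext fun j => by rw [hw j]
    subst hc
    rfl

theorem card_supersets {α : Type*} [Fintype α] [DecidableEq α] (Y : Finset α) {m : ℕ}
    (hm : Y.card ≤ m) :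
    Nat.card {s : Finset α // Y ⊆ s ∧ s.card = m} =
      (Fintype.card α - Y.card).choose (m - Y.card) := by
  classical
  have e : {s : Finset α // Y ⊆ s ∧ s.card = m} ≃
      {t : Finset α // t ∈ Finset.powersetCard (m - Y.card) Yᶜ} :=
  { toFun := fun s => ⟨s.1 \ Y, by
      rw [Finset.mem_powersetCard]
      refine ⟨fun x hx => ?_, by rw [Finset.card_sdiff_of_subset s.2.1, s.2.2]⟩
      rw [Finset.mem_sdiff] at hx
      simpa using hx.2⟩
    invFun := fun t => ⟨t.1 ∪ Y, Finset.subset_union_right, by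
      have ht := Finset.mem_powersetCard.mp t.2
      have hd : Disjoint t.1 Y := fun u hu1 hu2 => by
        intro x hx
        have := ht.1 (hu1 hx)
        simp only [Finset.mem_compl] at this
        exact absurd (hu2 hx) this
      rw [Finset.card_union_of_disjoint hd, ht.2]
      omega⟩
    left_inv := fun s => Subtype.ext (Finset.sdiff_union_of_subset s.2.1)
    right_inv := fun t => by
      apply Subtype.ext
      have ht := Finset.mem_powersetCard.mp t.2
      have hd : Disjoint t.1 Y := fun u hu1 hu2 => by
        intro x hx
        have := ht.1 (hu1 hx)
        simp only [Finset.mem_compl] at this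
        exact absurd (hu2 hx) this
      exact Finset.union_sdiff_cancel_right hd }
  rw [Nat.card_congr e, Nat.card_eq_fintype_card, Fintype.card_coe,
    Finset.card_powersetCard, Finset.card_compl]

theorem card_fiber (N k m : ℕ) (hN : N = 2 * m) (hk : k ≤ m)
    (i : Fin k → Fin N) (hi : Injective i)
    (y : Fin k → Fin N) (hy : Injective y)
    (s : Finset (Fin N)) (hs : s.card = m) (hys : ∀ j, y j ∈ s) :
    Nat.card {f : Fin N → Fin N //
        (TwoToOne f ∧ ∀ j, f (i j) = y j) ∧ Finset.image f Finset.univ = s} * 2 ^ (m - k)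
      = Nat.factorial (N - k) := by
  classical
  set T := {f : Fin N → Fin N // (TwoToOne f ∧ ∀ j, f (i j) = y j) ∧ Finset.image f Finset.univ = s} with hT
  set W := {w : Fin N ≃ ↥s × Bool // ∀ j, ((w (i j)).1 : Fin N) = y j} with hW
  have hcardN : Fintype.card (↥s × Bool) = N := by
    rw [Fintype.card_prod, Fintype.card_coe, hs, Fintype.card_bool]; omega
  have claim1 : Nat.card W = 2 ^ k * (N - k).factorial := by
    have e1 : W ≃ {w : Fin N ≃ ↥s × Bool // ∀ j, ((w (i j)).1) = (⟨y j, hys j⟩ : ↥s)} :=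
      Equiv.subtypeEquivRight (fun w => by
        constructor
        · intro h j; exact Subtype.ext (h j)
        · intro h j; rw [h j])
    have e2 := splitSecond (γ := Fin N ≃ ↥s × Bool) (fun w j => w (i j))
      (fun j => (⟨y j, hys j⟩ : ↥s))
    rw [Nat.card_congr (e1.trans e2), Nat.card_eq_fintype_card, Fintype.card_sigma]
    have hsummand : ∀ c : Fin k → Bool,
        Fintype.card {w : Fin N ≃ ↥s × Bool //
          ∀ j, w (i j) = ((⟨y j, hys j⟩ : ↥s), c j)} = (N - k).factorial := by
      intro c
      have hv : Injective (fun j => (((⟨y j, hys j⟩ : ↥s), c j) : ↥s × Bool)) := by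
        intro a b hab
        apply hy
        exact congrArg (fun p => ((p.1 : Fin N))) hab
      rw [← Nat.card_eq_fintype_card,
        card_constrained_equiv hi hv (by rw [Fintype.card_fin, hcardN]), Fintype.card_fin]
    rw [Finset.sum_congr rfl (fun c _ => hsummand c), Finset.sum_const, smul_eq_mul,
      Finset.card_univ]
    congr 1
    rw [Fintype.card_fun, Fintype.card_bool, Fintype.card_fin]
  have hΨ : ∀ w : W, (TwoToOne (fun x => ((w.1 x).1 : Fin N)) ∧
      ∀ j, ((w.1 (i j)).1 : Fin N) = y j) ∧
      Finset.image (fun x => ((w.1 x).1 : Fin N)) Finset.univ = s := by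
    rintro ⟨w, hw⟩
    refine ⟨⟨?_, hw⟩, ?_⟩
    · intro z hz
      obtain ⟨x₀, hx₀⟩ := hz
      have hzs : z ∈ s := hx₀ ▸ (w x₀).1.2
      have hne : w.symm (⟨z, hzs⟩, true) ≠ w.symm (⟨z, hzs⟩, false) := by
        intro h
        have := w.symm.injective h
        simp at this
      have hfilter : (Finset.univ.filter fun x => ((w x).1 : Fin N) = z) =
          {w.symm (⟨z, hzs⟩, true), w.symm (⟨z, hzs⟩, false)} := by
        ext x
        simp only [Finset.mem_filter, Finset.mem_univ, true_and, Finset.mem_insert,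
          Finset.mem_singleton]
        constructor
        · intro hx
          have h1 : (w x).1 = ⟨z, hzs⟩ := Subtype.ext hx
          rcases Bool.eq_false_or_eq_true ((w x).2) with h2 | h2
          · left
            rw [Equiv.eq_symm_apply]
            exact Prod.ext h1 h2
          · right
            rw [Equiv.eq_symm_apply]
            exact Prod.ext h1 h2
        · rintro (rfl | rfl) <;> rw [Equiv.apply_symm_apply]
      rw [hfilter, Finset.card_insert_of_notMem (by simpa using hne), Finset.card_singleton]
    · apply Finset.Subset.antisymm
      · intro z hz
        rw [Finset.mem_image] at hz
        obtain ⟨x, _, rfl⟩ := hz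
        exact (w x).1.2
      · intro z hz
        rw [Finset.mem_image]
        exact ⟨w.symm (⟨z, hz⟩, false), Finset.mem_univ _, by rw [Equiv.apply_symm_apply]⟩
  let Ψ : W → T := fun w => ⟨fun x => ((w.1 x).1 : Fin N), hΨ w⟩
  have claim2 : Nat.card W = Nat.card T * 2 ^ m := by
    rw [Nat.card_congr (Equiv.sigmaFiberEquiv Ψ).symm, Nat.card_eq_fintype_card,
      Fintype.card_sigma]
    have hfib : ∀ f : T, Fintype.card {w : W // Ψ w = f} = 2 ^ m := by
      intro f
      have hmem : ∀ x, f.1 x ∈ s := fun x => by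
        have h := Finset.mem_image_of_mem f.1 (Finset.mem_univ x)
        rwa [f.2.2] at h
      set F : Fin N → ↥s := fun x => ⟨f.1 x, hmem x⟩ with hF
      have e3 : {w : W // Ψ w = f} ≃ {w : Fin N ≃ ↥s × Bool // ∀ x, (w x).1 = F x} :=
      { toFun := fun w => ⟨w.1.1, fun x =>
          Subtype.ext (congrFun (congrArg Subtype.val w.2) x)⟩
        invFun := fun w => ⟨⟨w.1, fun j =>
            (congrArg Subtype.val (w.2 (i j))).trans (f.2.1.2 j)⟩,
          Subtype.ext (funext fun x => congrArg Subtype.val (w.2 x))⟩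
        left_inv := fun w => rfl
        right_inv := fun w => rfl }
      rw [Fintype.card_congr (e3.trans (fiberEquivBool F)), Fintype.card_pi]
      have hz : ∀ z : ↥s, Fintype.card ({x // F x = z} ≃ Bool) = 2 := by
        intro z
        have hcard2 : Fintype.card {x // F x = z} = 2 := by
          have e4 : {x // F x = z} ≃ {x // f.1 x = (z : Fin N)} :=
            Equiv.subtypeEquivRight (fun x => by
              constructor
              · intro h; exact congrArg Subtype.val h
              · intro h; exact Subtype.ext h)
          rw [Fintype.card_congr e4, Fintype.card_subtype]
          apply f.2.1.1
          have hzz : (z : Fin N) ∈ Finset.image f.1 Finset.univ := by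
            rw [f.2.2]; exact z.2
          obtain ⟨x, _, hx⟩ := Finset.mem_image.mp hzz
          exact ⟨x, hx⟩
        rw [Fintype.card_equiv (Fintype.equivOfCardEq (by rw [hcard2, Fintype.card_bool])),
          hcard2, Nat.factorial_two]
      rw [Finset.prod_congr rfl (fun z _ => hz z), Finset.prod_const, Finset.card_univ,
        Fintype.card_coe, hs]
    rw [Finset.sum_congr rfl (fun f _ => hfib f), Finset.sum_const, smul_eq_mul,
      Finset.card_univ, Nat.card_eq_fintype_card]
  have hpow : (2:ℕ) ^ (m - k) * 2 ^ k = 2 ^ m := by rw [← pow_add]; congr 1; omega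
  have hTW : Nat.card T * 2 ^ m = 2 ^ k * (N - k).factorial := by rw [← claim2, claim1]
  have h2 : Nat.card T * 2 ^ (m - k) * 2 ^ k = (N - k).factorial * 2 ^ k := by
    rw [mul_assoc, hpow, hTW]; ring
  exact Nat.eq_of_mul_eq_mul_right (by positivity) h2

theorem stmt1 (N k : ℕ) (hEven : Even N) (hk : k ≤ N / 2)
    (i : Fin k → Fin N) (hi : StrictMono i)
    (y : Fin k → Fin N) (hy : Function.Injective y) :
    Nat.card {f : Fin N → Fin N // TwoToOne f ∧ ∀ j, f (i j) = y j} =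
      (N - k).choose (N / 2 - k) * (N - k).choose k * Nat.factorial k *
        Nat.factorial (N - 2 * k) / 2 ^ (N / 2 - k) := by
  classical
  obtain ⟨m, hm⟩ := hEven
  have hN : N = 2 * m := by omega
  have hm2 : N / 2 = m := by omega
  rw [hm2] at hk ⊢
  have hii : Injective i := hi.injective
  have hfact : (N - k).choose k * Nat.factorial k * Nat.factorial (N - 2 * k) =
      (N - k).factorial := by
    have hkk : k ≤ N - k := by omega
    have h := Nat.choose_mul_factorial_mul_factorial hkk
    have hss : N - k - k = N - 2 * k := by omega
    rw [hss] at h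
    exact h
  let V := {s : Finset (Fin N) // (∀ j, y j ∈ s) ∧ s.card = m}
  have himg : ∀ f : {f : Fin N → Fin N // TwoToOne f ∧ ∀ j, f (i j) = y j},
      (∀ j, y j ∈ Finset.image f.1 Finset.univ) ∧ (Finset.image f.1 Finset.univ).card = m := by
    rintro ⟨f, hf1, hf2⟩
    constructor
    · intro j
      rw [← hf2 j]
      exact Finset.mem_image_of_mem _ (Finset.mem_univ _)
    · show (Finset.image f Finset.univ).card = m
      have hsum : (Finset.univ : Finset (Fin N)).card =
          ∑ z ∈ Finset.image f Finset.univ, (Finset.univ.filter fun x => f x = z).card :=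
        Finset.card_eq_sum_card_fiberwise
          (fun x _ => Finset.mem_image_of_mem _ (Finset.mem_univ x))
      have h2 : ∀ z ∈ Finset.image f Finset.univ,
          (Finset.univ.filter fun x => f x = z).card = 2 := by
        intro z hz
        obtain ⟨x, _, hx⟩ := Finset.mem_image.mp hz
        exact hf1 z ⟨x, hx⟩
      rw [Finset.sum_congr rfl h2, Finset.sum_const, smul_eq_mul, Finset.card_univ,
        Fintype.card_fin] at hsum
      omega
  let img : {f : Fin N → Fin N // TwoToOne f ∧ ∀ j, f (i j) = y j} → V :=
    fun f => ⟨Finset.image f.1 Finset.univ, himg f⟩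
  have key : Nat.card {f : Fin N → Fin N // TwoToOne f ∧ ∀ j, f (i j) = y j} * 2 ^ (m - k)
      = (N - k).choose (m - k) * (N - k).factorial := by
    rw [Nat.card_congr (Equiv.sigmaFiberEquiv img).symm, Nat.card_eq_fintype_card,
      Fintype.card_sigma, Finset.sum_mul]
    have hfib : ∀ s : V, Fintype.card {f // img f = s} * 2 ^ (m - k) = (N - k).factorial := by
      intro s
      have e5 : {f // img f = s} ≃
          {f : Fin N → Fin N // (TwoToOne f ∧ ∀ j, f (i j) = y j) ∧
            Finset.image f Finset.univ = s.1} :=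
      { toFun := fun f => ⟨f.1.1, f.1.2, congrArg Subtype.val f.2⟩
        invFun := fun f => ⟨⟨f.1, f.2.1⟩, Subtype.ext f.2.2⟩
        left_inv := fun f => rfl
        right_inv := fun f => rfl }
      rw [Fintype.card_congr e5, ← Nat.card_eq_fintype_card]
      exact card_fiber N k m hN hk i hii y hy s.1 s.2.2 s.2.1
    rw [Finset.sum_congr rfl (fun s _ => hfib s), Finset.sum_const, smul_eq_mul,
      Finset.card_univ]
    congr 1
    have e6 : V ≃ {s : Finset (Fin N) // Finset.image y Finset.univ ⊆ s ∧ s.card = m} :=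
      Equiv.subtypeEquivRight (fun s => by
        constructor
        · rintro ⟨h1, h2⟩
          refine ⟨fun z hz => ?_, h2⟩
          obtain ⟨j, _, rfl⟩ := Finset.mem_image.mp hz
          exact h1 j
        · rintro ⟨h1, h2⟩
          exact ⟨fun j => h1 (Finset.mem_image_of_mem _ (Finset.mem_univ j)), h2⟩)
    have hYc : (Finset.image y Finset.univ).card = k := by
      rw [Finset.card_image_of_injective _ hy, Finset.card_univ, Fintype.card_fin]
    rw [← Nat.card_eq_fintype_card, Nat.card_congr e6,
      card_supersets _ (by rw [hYc]; exact hk), hYc, Fintype.card_fin]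
  have hnum : (N - k).choose (m - k) * (N - k).choose k * Nat.factorial k *
      Nat.factorial (N - 2 * k) = (N - k).choose (m - k) * (N - k).factorial := by
    rw [← hfact]; ring
  rw [hnum]
  exact (Nat.div_eq_of_eq_mul_left (by positivity) key.symm).symm
end

section
/- For even N, distinct indices i_1,...,i_k ∈ [N] and distinct values y_1,...,y_k ∈ [N] with k ≤ N/2, the probability under the uniform distribution on 2-to-1 functions [N]→[N] that f(i_j)=y_j for all j equals (∏_{i=0}^{k−1} 1/(N−i)) · (∏_{i=0}^{k−1} (N−2i)/(N−i)). -/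
open Finset

open Classical in
noncomputable def S2 (N : ℕ) (A B : Finset (Fin N)) (L : List (Fin N × Fin N)) :
    Finset (Fin N → Fin N) :=
  Finset.univ.filter (fun g =>
    (∀ x ∈ A, g x ∈ B) ∧ (∀ x, x ∉ A → g x = x) ∧
    (∀ y : Fin N, (A.filter (fun x => g x = y)).Nonempty →
        (A.filter (fun x => g x = y)).card = 2) ∧
    (∀ p ∈ L, g p.1 = p.2))

lemma mem_S2 {N : ℕ} {A B : Finset (Fin N)} {L : List (Fin N × Fin N)}
    {g : Fin N → Fin N} :
    g ∈ S2 N A B L ↔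
      (∀ x ∈ A, g x ∈ B) ∧ (∀ x, x ∉ A → g x = x) ∧
      (∀ y : Fin N, (A.filter (fun x => g x = y)).Nonempty →
          (A.filter (fun x => g x = y)).card = 2) ∧
      (∀ p ∈ L, g p.1 = p.2) := by
  simp [S2]

lemma S2_empty {N : ℕ} (B : Finset (Fin N)) : (S2 N ∅ B []).card = 1 := by
  have : S2 N ∅ B [] = {id} := by
    ext g
    simp only [mem_S2, Finset.notMem_empty, Finset.mem_singleton]
    constructor
    · rintro ⟨-, h, -, -⟩
      funext x; exact h x (by simp)
    · rintro rfl
      refine ⟨by simp, fun x _ => rfl, by simp [Finset.filter_empty], by simp⟩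
  rw [this]; simp

lemma S2_split_value {N : ℕ} {A B : Finset (Fin N)} {x0 : Fin N} (hx0 : x0 ∈ A) :
    (S2 N A B []).card = ∑ y0 ∈ B, (S2 N A B [(x0, y0)]).card := by
  classical
  have h := Finset.card_eq_sum_card_fiberwise
    (f := fun g : Fin N → Fin N => g x0) (s := S2 N A B []) (t := B)
    (fun g hg => (mem_S2.mp hg).1 x0 hx0)
  rw [h]
  refine Finset.sum_congr rfl (fun y0 _ => ?_)
  congr 1
  ext g
  simp only [Finset.mem_filter, mem_S2, List.mem_singleton]
  constructor
  · rintro ⟨⟨h1, h2, h3, -⟩, h5⟩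
    exact ⟨h1, h2, h3, by rintro p rfl; exact h5⟩
  · rintro ⟨h1, h2, h3, h4⟩
    exact ⟨⟨h1, h2, h3, by simp⟩, h4 _ rfl⟩

lemma S2_fiber_card {N : ℕ} {A B : Finset (Fin N)} {x0 y0 p : Fin N}
    {L' : List (Fin N × Fin N)}
    (hx0 : x0 ∈ A) (hpA : p ∈ A) (hpx : p ≠ x0)
    (hpf : p ∉ L'.map Prod.fst) (hfst : x0 ∉ L'.map Prod.fst)
    (hy0 : y0 ∈ B)
    (hsnd : y0 ∉ L'.map Prod.snd) (hfstA : ∀ q ∈ L', q.1 ∈ A) :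
    ((S2 N A B ((x0, y0) :: L')).filter (fun g => g p = y0)).card =
      (S2 N ((A.erase x0).erase p) (B.erase y0) L').card := by
  classical
  set A'' := (A.erase x0).erase p with hA''
  have hmemA'' : ∀ x, x ∈ A'' ↔ x ∈ A ∧ x ≠ x0 ∧ x ≠ p := by
    intro x
    simp only [hA'', Finset.mem_erase]
    tauto
  -- q.1 for q ∈ L' is in A'' and distinct from x0, p
  have hq1 : ∀ q ∈ L', q.1 ≠ x0 ∧ q.1 ≠ p := by
    intro q hq
    constructor
    · rintro rfl; exact hfst (List.mem_map.mpr ⟨q, hq, rfl⟩)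
    · rintro rfl; exact hpf (List.mem_map.mpr ⟨q, hq, rfl⟩)
  apply Finset.card_nbij'
    (i := fun g x => if x = x0 ∨ x = p then x else g x)
    (j := fun g x => if x = x0 ∨ x = p then y0 else g x)
  · -- forward map lands in target
    intro g hg
    rw [Finset.mem_coe, Finset.mem_filter, mem_S2] at hg
    obtain ⟨⟨h1, h2, h3, h4⟩, hgp⟩ := hg
    have hgx0 : g x0 = y0 := h4 (x0, y0) List.mem_cons_self
    have hFcard := h3 y0 ⟨x0, Finset.mem_filter.mpr ⟨hx0, hgx0⟩⟩
    have hF : A.filter (fun x => g x = y0) = {x0, p} := by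
      apply (Finset.eq_of_subset_of_card_le _ _).symm
      · intro x hx
        rcases Finset.mem_insert.mp hx with rfl | hx
        · exact Finset.mem_filter.mpr ⟨hx0, hgx0⟩
        · rw [Finset.mem_singleton] at hx; subst hx
          exact Finset.mem_filter.mpr ⟨hpA, hgp⟩
      · rw [hFcard, Finset.card_insert_of_notMem (by simpa using hpx.symm),
          Finset.card_singleton]
    have hne_y0 : ∀ x ∈ A'', g x ≠ y0 := by
      intro x hx hgx
      rw [hmemA''] at hx
      have : x ∈ A.filter (fun x => g x = y0) := Finset.mem_filter.mpr ⟨hx.1, hgx⟩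
      rw [hF] at this
      simp only [Finset.mem_insert, Finset.mem_singleton] at this
      rcases this with rfl | rfl
      exacts [hx.2.1 rfl, hx.2.2 rfl]
    simp only [Finset.mem_coe]; rw [mem_S2]
    have hsame : ∀ x ∈ A'', (if x = x0 ∨ x = p then x else g x) = g x := by
      intro x hx
      rw [hmemA''] at hx
      rw [if_neg (by tauto)]
    refine ⟨?_, ?_, ?_, ?_⟩
    · intro x hx
      rw [hsame x hx]
      rw [hmemA''] at hx
      exact Finset.mem_erase.mpr ⟨hne_y0 x ((hmemA'' x).mpr hx), h1 x hx.1⟩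
    · intro x hx
      by_cases hc : x = x0 ∨ x = p
      · rw [if_pos hc]
      · rw [if_neg hc]
        apply h2
        intro hxA
        exact hx ((hmemA'' x).mpr ⟨hxA, by tauto⟩)
    · intro yy hyy
      have hset : A''.filter (fun x => (if x = x0 ∨ x = p then x else g x) = yy)
          = A''.filter (fun x => g x = yy) := by
        apply Finset.filter_congr
        intro x hx
        rw [hsame x hx]
      rw [hset] at hyy ⊢
      obtain ⟨x, hx⟩ := hyy
      have hxA'' := (Finset.mem_filter.mp hx).1
      have hgx := (Finset.mem_filter.mp hx).2
      have hyyne : yy ≠ y0 := by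
        rintro rfl
        exact hne_y0 x hxA'' hgx
      have hset2 : A''.filter (fun x => g x = yy) = A.filter (fun x => g x = yy) := by
        ext z
        simp only [Finset.mem_filter, hmemA'']
        constructor
        · tauto
        · rintro ⟨hzA, hz⟩
          refine ⟨⟨hzA, ?_, ?_⟩, hz⟩
          · rintro rfl; exact hyyne (by rw [← hz, hgx0])
          · rintro rfl; exact hyyne (by rw [← hz, hgp])
      have hyy2 : (A.filter (fun x => g x = yy)).Nonempty := by
        rw [← hset2]; exact ⟨x, hx⟩
      rw [hset2]
      exact h3 yy hyy2
    · intro q hq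
      have := hq1 q hq
      rw [if_neg (by tauto)]
      exact h4 q (List.mem_cons_of_mem _ hq)
  · -- backward map lands in source
    intro g hg
    rw [Finset.mem_coe, mem_S2] at hg
    obtain ⟨h1, h2, h3, h4⟩ := hg
    have hid : ∀ x ∈ A'', (if x = x0 ∨ x = p then y0 else g x) = g x := by
      intro x hx
      rw [hmemA''] at hx
      rw [if_neg (by tauto)]
    simp only [Finset.mem_coe]; rw [Finset.mem_filter, mem_S2]
    have hAfilt : ∀ yy, yy ≠ y0 →
        A.filter (fun x => (if x = x0 ∨ x = p then y0 else g x) = yy)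
          = A''.filter (fun x => g x = yy) := by
      intro yy hyy
      ext z
      simp only [Finset.mem_filter, hmemA'']
      constructor
      · intro ⟨hzA, hz⟩
        by_cases hc : z = x0 ∨ z = p
        · rw [if_pos hc] at hz; exact absurd hz.symm hyy
        · rw [if_neg hc] at hz
          exact ⟨⟨hzA, by tauto⟩, hz⟩
      · intro ⟨⟨hzA, hz1, hz2⟩, hz⟩
        rw [if_neg (by tauto)]
        exact ⟨hzA, hz⟩
    have hfilt0 : A.filter (fun x => (if x = x0 ∨ x = p then y0 else g x) = y0)
        = {x0, p} := by
      ext z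
      simp only [Finset.mem_filter, Finset.mem_insert, Finset.mem_singleton]
      constructor
      · intro ⟨hzA, hz⟩
        by_contra hc
        push_neg at hc
        rw [if_neg (by tauto)] at hz
        have : g z ∈ B.erase y0 := h1 z ((hmemA'' z).mpr ⟨hzA, hc.1, hc.2⟩)
        exact (Finset.mem_erase.mp this).1 hz
      · rintro (rfl | rfl)
        · exact ⟨hx0, by simp⟩
        · exact ⟨hpA, by simp⟩
    refine ⟨⟨?_, ?_, ?_, ?_⟩, by simp⟩
    · intro x hx
      by_cases hc : x = x0 ∨ x = p
      · rw [if_pos hc]; exact hy0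
      · rw [if_neg hc]
        push_neg at hc
        have := h1 x ((hmemA'' x).mpr ⟨hx, hc.1, hc.2⟩)
        exact Finset.mem_erase.mp this |>.2
    · intro x hx
      have hxne : x ≠ x0 := fun h => hx (h ▸ hx0)
      have hxnp : x ≠ p := fun h => hx (h ▸ hpA)
      rw [if_neg (by tauto)]
      exact h2 x (fun hc => hx ((Finset.mem_erase.mp (Finset.mem_erase.mp hc).2).2))
    · intro yy hyy
      by_cases hc : yy = y0
      · subst hc
        rw [hfilt0] at hyy ⊢
        rw [Finset.card_insert_of_notMem (by simpa using hpx.symm), Finset.card_singleton]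
      · rw [hAfilt yy hc] at hyy ⊢
        exact h3 yy hyy
    · intro q hq
      rcases List.mem_cons.mp hq with rfl | hq
      · simp
      · have := hq1 q hq
        rw [if_neg (by tauto)]
        exact h4 q hq
  · -- left inverse
    intro g hg
    rw [Finset.mem_coe, Finset.mem_filter, mem_S2] at hg
    obtain ⟨⟨h1, h2, h3, h4⟩, hgp⟩ := hg
    have hgx0 : g x0 = y0 := h4 (x0, y0) List.mem_cons_self
    funext x
    by_cases hc : x = x0 ∨ x = p
    · simp only [if_pos hc]
      rcases hc with rfl | rfl
      exacts [hgx0.symm, hgp.symm]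
    · simp only [if_neg hc]
  · -- right inverse
    intro g hg
    rw [Finset.mem_coe, mem_S2] at hg
    obtain ⟨h1, h2, h3, h4⟩ := hg
    funext x
    by_cases hc : x = x0 ∨ x = p
    · simp only [if_pos hc]
      have hxA'' : x ∉ A'' := by
        rw [hmemA'']; tauto
      exact (h2 x hxA'').symm
    · simp only [if_neg hc]

lemma S2_peel {N : ℕ} {A B : Finset (Fin N)} {x0 y0 : Fin N}
    {L' : List (Fin N × Fin N)}
    (hx0 : x0 ∈ A) (hy0 : y0 ∈ B) (hfst : x0 ∉ L'.map Prod.fst)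
    (hsnd : y0 ∉ L'.map Prod.snd) (hfstA : ∀ q ∈ L', q.1 ∈ A) :
    (S2 N A B ((x0, y0) :: L')).card =
      ∑ p ∈ (A.erase x0).filter (fun p => p ∉ L'.map Prod.fst),
        (S2 N ((A.erase x0).erase p) (B.erase y0) L').card := by
  classical
  have hcover : S2 N A B ((x0, y0) :: L') =
      ((A.erase x0).filter (fun p => p ∉ L'.map Prod.fst)).biUnion
        (fun p => (S2 N A B ((x0, y0) :: L')).filter (fun g => g p = y0)) := by
    ext g
    simp only [Finset.mem_biUnion, Finset.mem_filter, Finset.mem_erase]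
    constructor
    · intro hg
      rw [mem_S2] at hg
      obtain ⟨h1, h2, h3, h4⟩ := hg
      have hgx0 : g x0 = y0 := h4 (x0, y0) List.mem_cons_self
      have hne : (A.filter (fun x => g x = y0)).Nonempty :=
        ⟨x0, Finset.mem_filter.mpr ⟨hx0, hgx0⟩⟩
      have hcard := h3 y0 hne
      obtain ⟨a, b, hab, hF⟩ := Finset.card_eq_two.mp hcard
      have hx0F : x0 ∈ A.filter (fun x => g x = y0) :=
        Finset.mem_filter.mpr ⟨hx0, hgx0⟩
      rw [hF] at hx0F
      simp only [Finset.mem_insert, Finset.mem_singleton] at hx0F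
      -- let p be the other element
      obtain ⟨p, hpF, hpx⟩ : ∃ p, p ∈ A.filter (fun x => g x = y0) ∧ p ≠ x0 := by
        rcases hx0F with rfl | rfl
        · exact ⟨b, by rw [hF]; simp, hab.symm⟩
        · exact ⟨a, by rw [hF]; simp, hab⟩
      obtain ⟨hpA, hgp⟩ := Finset.mem_filter.mp hpF
      have hpf : p ∉ L'.map Prod.fst := by
        intro hmem
        obtain ⟨q, hq, hq1⟩ := List.mem_map.mp hmem
        have : g p = q.2 := by rw [← hq1]; exact h4 q (List.mem_cons_of_mem _ hq)
        apply hsnd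
        rw [← hgp, this]
        exact List.mem_map.mpr ⟨q, hq, rfl⟩
      exact ⟨p, ⟨⟨hpx, hpA⟩, hpf⟩, mem_S2.mpr ⟨h1, h2, h3, h4⟩, hgp⟩
    · rintro ⟨p, -, hg, -⟩
      exact hg
  rw [hcover, Finset.card_biUnion]
  · refine Finset.sum_congr rfl (fun p hp => ?_)
    simp only [Finset.mem_filter, Finset.mem_erase] at hp
    obtain ⟨⟨hpx, hpA⟩, hpf⟩ := hp
    exact S2_fiber_card hx0 hpA hpx hpf hfst hy0 hsnd hfstA
  · intro p hp q hq hpq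
    simp only [Finset.mem_coe, Finset.mem_filter, Finset.mem_erase] at hp hq
    rw [Function.onFun, Finset.disjoint_left]
    intro g hg1 hg2
    rw [Finset.mem_filter, mem_S2] at hg1 hg2
    obtain ⟨⟨h1, h2, h3, h4⟩, hgp⟩ := hg1
    obtain ⟨-, hgq⟩ := hg2
    have hgx0 : g x0 = y0 := h4 (x0, y0) List.mem_cons_self
    have hcard := h3 y0 ⟨x0, Finset.mem_filter.mpr ⟨hx0, hgx0⟩⟩
    have hsub : ({x0, p, q} : Finset (Fin N)) ⊆ A.filter (fun x => g x = y0) := by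
      intro z hz
      simp only [Finset.mem_insert, Finset.mem_singleton] at hz
      rcases hz with rfl | rfl | rfl
      · exact Finset.mem_filter.mpr ⟨hx0, hgx0⟩
      · exact Finset.mem_filter.mpr ⟨hp.1.2, hgp⟩
      · exact Finset.mem_filter.mpr ⟨hq.1.2, hgq⟩
    have hcard3 : ({x0, p, q} : Finset (Fin N)).card = 3 := by
      rw [Finset.card_insert_of_notMem (by simp [hp.1.1, hq.1.1, Ne.symm hp.1.1, Ne.symm hq.1.1]),
        Finset.card_insert_of_notMem (by simpa using hpq), Finset.card_singleton]
    have := Finset.card_le_card hsub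
    omega

lemma prod_peel (f : ℕ → ℝ) (k : ℕ) (hk : 0 < k) :
    ∏ t ∈ Finset.range k, f t = f 0 * ∏ t ∈ Finset.range (k - 1), f (t + 1) := by
  obtain ⟨j, rfl⟩ : ∃ j, k = j + 1 := ⟨k - 1, by omega⟩
  rw [Finset.prod_range_succ']
  simp [mul_comm]

lemma S2_card_formula (N : ℕ) :
    ∀ n : ℕ, ∀ (A B : Finset (Fin N)) (L : List (Fin N × Fin N)),
    A.card = n → Even n → 2 * L.length ≤ n → n / 2 ≤ B.card →
    (L.map Prod.fst).Nodup → (∀ q ∈ L, q.1 ∈ A) →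
    (L.map Prod.snd).Nodup → (∀ q ∈ L, q.2 ∈ B) →
    ((S2 N A B L).card : ℝ) =
      (∏ t ∈ Finset.range L.length, ((n : ℝ) - L.length - t)) *
      ((∏ t ∈ Finset.range (n / 2 - L.length), ((n : ℝ) - 2 * L.length - 1 - 2 * t)) *
       (∏ t ∈ Finset.range (n / 2 - L.length), ((B.card : ℝ) - L.length - t))) := by
  intro n
  induction n using Nat.strong_induction_on with
  | _ n IH =>
  intro A B L hA hEv hlen hB hnod1 hin1 hnod2 hin2
  obtain ⟨m, hm⟩ := hEv
  have hn2 : n / 2 = m := by omega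
  rcases L with _ | ⟨⟨x0, y0⟩, L'⟩
  · -- no constraints
    rcases Nat.eq_zero_or_pos n with rfl | hn
    · have hA0 : A = ∅ := Finset.card_eq_zero.mp hA
      subst hA0
      rw [S2_empty]
      norm_num
    · -- n ≥ 2
      have hn2' : 2 ≤ n := by omega
      obtain ⟨x0, hx0⟩ := Finset.card_pos.mp (hA ▸ hn)
      have hAe : (A.erase x0).card = n - 1 := by
        rw [Finset.card_erase_of_mem hx0, hA]
      rw [S2_split_value hx0]
      have hpeel : ∀ y0 ∈ B, (S2 N A B [(x0, y0)]).card =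
          ∑ p ∈ A.erase x0, (S2 N ((A.erase x0).erase p) (B.erase y0) []).card := by
        intro y0 hy0
        rw [S2_peel hx0 hy0 (by simp) (by simp) (by simp)]
        congr 1
        ext z
        simp
      have hval : ∀ y0 ∈ B, ∀ p ∈ A.erase x0,
          ((S2 N ((A.erase x0).erase p) (B.erase y0) []).card : ℝ) =
            (∏ t ∈ Finset.range (m - 1), (((n : ℝ) - 2) - 1 - 2 * t)) *
            (∏ t ∈ Finset.range (m - 1), (((B.card : ℝ) - 1) - t)) := by
        intro y0 hy0 p hp
        have hA'' : ((A.erase x0).erase p).card = n - 2 := by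
          rw [Finset.card_erase_of_mem hp, hAe]; omega
        have hB' : (B.erase y0).card = B.card - 1 := by
          rw [Finset.card_erase_of_mem hy0]
        have := IH (n - 2) (by omega) ((A.erase x0).erase p) (B.erase y0) []
          hA'' ⟨m - 1, by omega⟩ (by simp) (by rw [hB']; omega)
          (by simp) (by simp) (by simp) (by simp)
        rw [this, hB']
        have h1 : (n - 2) / 2 - List.length ([] : List (Fin N × Fin N)) = m - 1 := by simp; omega
        rw [h1]
        have hc1 : ((n - 2 : ℕ) : ℝ) = (n : ℝ) - 2 := by
          rw [Nat.cast_sub hn2']; norm_num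
        have hc2 : ((B.card - 1 : ℕ) : ℝ) = (B.card : ℝ) - 1 := by
          rw [Nat.cast_sub (by omega)]; norm_num
        simp only [List.length_nil, Nat.cast_zero, hc1, hc2]
        rw [Finset.prod_range_zero, one_mul]
        congr 1
        · exact Finset.prod_congr rfl fun t _ => by push_cast; ring
        · exact Finset.prod_congr rfl fun t _ => by push_cast; ring
      -- turn into a constant double sum
      set V : ℝ := (∏ t ∈ Finset.range (m - 1), (((n : ℝ) - 2) - 1 - 2 * t)) *
          (∏ t ∈ Finset.range (m - 1), (((B.card : ℝ) - 1) - t)) with hV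
      have hstep : ∀ y0 ∈ B, ((S2 N A B [(x0, y0)]).card : ℝ) = ((n : ℝ) - 1) * V := by
        intro y0 hy0
        rw [hpeel y0 hy0]
        push_cast
        rw [Finset.sum_congr rfl (fun p hp => hval y0 hy0 p hp), Finset.sum_const,
          nsmul_eq_mul, hAe, Nat.cast_sub (by omega : 1 ≤ n)]
        norm_num
      have hcast : ((∑ y0 ∈ B, (S2 N A B [(x0, y0)]).card : ℕ) : ℝ)
          = ∑ y0 ∈ B, ((S2 N A B [(x0, y0)]).card : ℝ) := by push_cast; rfl
      rw [hcast, Finset.sum_congr rfl hstep, Finset.sum_const, nsmul_eq_mul]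
      -- now pure algebra
      simp only [List.length_nil, Finset.prod_range_zero, Nat.cast_zero, Nat.sub_zero,
        mul_zero, sub_zero, hn2, one_mul]
      have hm0 : 0 < m := by omega
      have e1 : (∏ t ∈ Finset.range m, ((n : ℝ) - 1 - 2 * t)) =
          ((n : ℝ) - 1) * ∏ t ∈ Finset.range (m - 1), (((n : ℝ) - 2) - 1 - 2 * t) := by
        rw [prod_peel _ m hm0]
        congr 1
        · norm_num
        · exact Finset.prod_congr rfl fun t _ => by push_cast; ring
      have e2 : (∏ t ∈ Finset.range m, ((B.card : ℝ) - t)) =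
          (B.card : ℝ) * ∏ t ∈ Finset.range (m - 1), (((B.card : ℝ) - 1) - t) := by
        rw [prod_peel _ m hm0]
        congr 1
        · norm_num
        · exact Finset.prod_congr rfl fun t _ => by push_cast; ring
      rw [e1, e2, hV]
      ring
  · -- peel one constraint
    have hx0 : x0 ∈ A := hin1 (x0, y0) List.mem_cons_self
    have hy0 : y0 ∈ B := hin2 (x0, y0) List.mem_cons_self
    rw [List.map_cons, List.nodup_cons] at hnod1 hnod2
    obtain ⟨hx0f, hnod1'⟩ := hnod1
    obtain ⟨hy0s, hnod2'⟩ := hnod2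
    set k' := L'.length with hk'
    have hlen' : 2 * (k' + 1) ≤ n := by simpa using hlen
    have hm1 : 1 ≤ m := by omega
    have hAe : (A.erase x0).card = n - 1 := by
      rw [Finset.card_erase_of_mem hx0, hA]
    rw [S2_peel hx0 hy0 hx0f hy0s (fun q hq => hin1 q (List.mem_cons_of_mem _ hq))]
    set I := (A.erase x0).filter (fun p => p ∉ L'.map Prod.fst) with hI
    have hIcard : I.card = n - 1 - k' := by
      have hsub : (L'.map Prod.fst).toFinset ⊆ A.erase x0 := by
        intro z hz
        rw [List.mem_toFinset] at hz
        obtain ⟨q, hq, rfl⟩ := List.mem_map.mp hz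
        refine Finset.mem_erase.mpr ⟨?_, hin1 q (List.mem_cons_of_mem _ hq)⟩
        rintro rfl
        exact hx0f hz
      have : I = (A.erase x0) \ (L'.map Prod.fst).toFinset := by
        ext z
        simp [hI, List.mem_toFinset]
      rw [this, Finset.card_sdiff_of_subset hsub, hAe, List.toFinset_card_of_nodup hnod1',
        List.length_map]
    have hval : ∀ p ∈ I, ((S2 N ((A.erase x0).erase p) (B.erase y0) L').card : ℝ) =
        (∏ t ∈ Finset.range k', ((n : ℝ) - 2 - k' - t)) *
        ((∏ t ∈ Finset.range (m - 1 - k'), ((n : ℝ) - 2 - 2 * k' - 1 - 2 * t)) *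
         (∏ t ∈ Finset.range (m - 1 - k'), ((B.card : ℝ) - 1 - k' - t))) := by
      intro p hp
      rw [hI, Finset.mem_filter] at hp
      obtain ⟨hpE, hpf⟩ := hp
      have hA'' : ((A.erase x0).erase p).card = n - 2 := by
        rw [Finset.card_erase_of_mem hpE, hAe]; omega
      have hB' : (B.erase y0).card = B.card - 1 := Finset.card_erase_of_mem hy0
      have hin1' : ∀ q ∈ L', q.1 ∈ (A.erase x0).erase p := by
        intro q hq
        refine Finset.mem_erase.mpr ⟨?_, Finset.mem_erase.mpr
          ⟨?_, hin1 q (List.mem_cons_of_mem _ hq)⟩⟩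
        · rintro rfl
          exact hpf (List.mem_map.mpr ⟨q, hq, rfl⟩)
        · rintro rfl
          exact hx0f (List.mem_map.mpr ⟨q, hq, rfl⟩)
      have hin2' : ∀ q ∈ L', q.2 ∈ B.erase y0 := by
        intro q hq
        refine Finset.mem_erase.mpr ⟨?_, hin2 q (List.mem_cons_of_mem _ hq)⟩
        rintro rfl
        exact hy0s (List.mem_map.mpr ⟨q, hq, rfl⟩)
      have := IH (n - 2) (by omega) ((A.erase x0).erase p) (B.erase y0) L'
        hA'' ⟨m - 1, by omega⟩ (by omega) (by rw [hB']; omega)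
        hnod1' hin1' hnod2' hin2'
      rw [this, hB']
      have h1 : (n - 2) / 2 - k' = m - 1 - k' := by omega
      rw [h1]
      have hc1 : ((n - 2 : ℕ) : ℝ) = (n : ℝ) - 2 := by
        rw [Nat.cast_sub (by omega)]; norm_num
      have hc2 : ((B.card - 1 : ℕ) : ℝ) = (B.card : ℝ) - 1 := by
        rw [Nat.cast_sub (by omega)]; norm_num
      rw [hc1, hc2]
    have hcast : ((∑ p ∈ I, (S2 N ((A.erase x0).erase p) (B.erase y0) L').card : ℕ) : ℝ)
        = ∑ p ∈ I, ((S2 N ((A.erase x0).erase p) (B.erase y0) L').card : ℝ) := by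
      push_cast; rfl
    rw [hcast, Finset.sum_congr rfl hval, Finset.sum_const, nsmul_eq_mul, hIcard]
    -- algebra
    simp only [List.length_cons, hn2, ← hk']
    have hidx : m - (k' + 1) = m - 1 - k' := by omega
    rw [hidx]
    have e1 : (∏ t ∈ Finset.range (k' + 1), ((n : ℝ) - ((k' : ℝ) + 1) - t)) =
        ((n : ℝ) - ((k' : ℝ) + 1)) * ∏ t ∈ Finset.range k', ((n : ℝ) - 2 - k' - t) := by
      rw [prod_peel _ (k' + 1) (by omega)]
      simp only [Nat.add_sub_cancel]
      congr 1
      · norm_num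
      · exact Finset.prod_congr rfl fun t _ => by push_cast; ring
    have hcoef : ((n - 1 - k' : ℕ) : ℝ) = (n : ℝ) - ((k' : ℝ) + 1) := by
      rw [Nat.cast_sub (by omega), Nat.cast_sub (by omega)]; push_cast; ring
    rw [hcoef]
    push_cast
    rw [e1]
    have e2 : (∏ t ∈ Finset.range (m - 1 - k'), ((n : ℝ) - 2 * ((k' : ℝ) + 1) - 1 - 2 * t)) =
        ∏ t ∈ Finset.range (m - 1 - k'), ((n : ℝ) - 2 - 2 * k' - 1 - 2 * t) :=
      Finset.prod_congr rfl fun t _ => by ring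
    have e3 : (∏ t ∈ Finset.range (m - 1 - k'), ((B.card : ℝ) - ((k' : ℝ) + 1) - t)) =
        ∏ t ∈ Finset.range (m - 1 - k'), ((B.card : ℝ) - 1 - k' - t) :=
      Finset.prod_congr rfl fun t _ => by ring
    rw [e2, e3]
    ring

lemma prod_double (k : ℕ) (N : ℝ) : ∏ t ∈ Finset.range (2*k), (N - t) =
    (∏ t ∈ Finset.range k, (N - 2*t)) * ∏ t ∈ Finset.range k, (N - 1 - 2*t) := by
  induction k with
  | zero => simp
  | succ k ih =>
    rw [show 2*(k+1) = (2*k)+1+1 by ring, Finset.prod_range_succ, Finset.prod_range_succ,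
      Finset.prod_range_succ, Finset.prod_range_succ, ih]
    push_cast
    ring


theorem stmt3 (N k : ℕ) (hN : 0 < N) (hEven : Even N) (hk : k ≤ N / 2)
    (i : Fin k → Fin N) (hi : Function.Injective i)
    (y : Fin k → Fin N) (hy : Function.Injective y) :
    (Nat.card {f : Fin N → Fin N // TwoToOne f ∧ ∀ j, f (i j) = y j} : ℝ) /
        (Nat.card {f : Fin N → Fin N // TwoToOne f} : ℝ) =
      (∏ t ∈ Finset.range k, 1 / ((N : ℝ) - t)) *
        (∏ t ∈ Finset.range k, ((N : ℝ) - 2 * t) / ((N : ℝ) - t)) := by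
  classical
  obtain ⟨m, hm⟩ := hEven
  have hN2 : N / 2 = m := by omega
  have hkm : k ≤ m := by omega
  set L : List (Fin N × Fin N) := List.ofFn (fun j => (i j, y j)) with hL
  have hLlen : L.length = k := by simp [hL]
  have hcardu : (Finset.univ : Finset (Fin N)).card = N := by simp
  -- identify numerator and denominator with S2 cardinalities
  have key : ∀ (L' : List (Fin N × Fin N)),
      Finset.univ.filter (fun g : Fin N → Fin N => TwoToOne g ∧ ∀ q ∈ L', g q.1 = q.2)
        = S2 N Finset.univ Finset.univ L' := by
    intro L'
    ext g
    rw [Finset.mem_filter, mem_S2]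
    constructor
    · rintro ⟨-, h2, hcon⟩
      exact ⟨fun x _ => Finset.mem_univ _, fun x hx => absurd (Finset.mem_univ x) hx,
        fun y' hy' => h2 y' (let ⟨x, hx⟩ := hy'; ⟨x, (Finset.mem_filter.mp hx).2⟩), hcon⟩
    · rintro ⟨-, -, h3, h4⟩
      exact ⟨Finset.mem_univ g, fun y' hy' => h3 y' (let ⟨x, hx⟩ := hy';
        ⟨x, Finset.mem_filter.mpr ⟨Finset.mem_univ x, hx⟩⟩), h4⟩
  have hiff : ∀ g : Fin N → Fin N,
      (TwoToOne g ∧ ∀ j, g (i j) = y j) ↔ (TwoToOne g ∧ ∀ q ∈ L, g q.1 = q.2) := by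
    intro g
    constructor
    · rintro ⟨h1, h2⟩
      refine ⟨h1, fun q hq => ?_⟩
      obtain ⟨j, hj⟩ := List.mem_ofFn.mp hq
      rw [← hj]
      exact h2 j
    · rintro ⟨h1, h2⟩
      exact ⟨h1, fun j => h2 (i j, y j) (List.mem_ofFn.mpr ⟨j, rfl⟩)⟩
  clear_value L
  have hnum : (Nat.card {f : Fin N → Fin N // TwoToOne f ∧ ∀ j, f (i j) = y j})
      = (S2 N Finset.univ Finset.univ L).card := by
    rw [Nat.card_eq_fintype_card, Fintype.card_subtype,
      Finset.filter_congr (fun g _ => hiff g), key L]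
  have hden : (Nat.card {f : Fin N → Fin N // TwoToOne f})
      = (S2 N Finset.univ Finset.univ []).card := by
    rw [Nat.card_eq_fintype_card, Fintype.card_subtype, ← key []]
    apply Finset.card_nbij' id id <;> intro g hg <;>
      simp_all [Finset.mem_filter]
  have hLfst : (L.map Prod.fst).Nodup := by
    rw [hL, List.map_ofFn]
    exact List.nodup_ofFn.mpr (fun a b hab => hi hab)
  have hLsnd : (L.map Prod.snd).Nodup := by
    rw [hL, List.map_ofFn]
    exact List.nodup_ofFn.mpr (fun a b hab => hy hab)
  have ha1 : 2 * L.length ≤ N := by rw [hLlen]; clear * - hk hN2 hm; omega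
  have ha2 : N / 2 ≤ (Finset.univ : Finset (Fin N)).card := by rw [hcardu]; clear * - hm; omega
  have ha3 : ∀ q ∈ L, q.1 ∈ (Finset.univ : Finset (Fin N)) := fun q _ => Finset.mem_univ q.1
  have ha4 : ∀ q ∈ L, q.2 ∈ (Finset.univ : Finset (Fin N)) := fun q _ => Finset.mem_univ q.2
  have hnumf := S2_card_formula N N Finset.univ Finset.univ L hcardu ⟨m, hm⟩
    ha1 ha2 hLfst ha3 hLsnd ha4
  have hdenf := S2_card_formula N N Finset.univ Finset.univ [] hcardu ⟨m, hm⟩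
    (by simp) ha2 (by simp) (by simp) (by simp) (by simp)
  rw [hnum, hden, hnumf, hdenf, hcardu, hLlen, hN2]
  simp only [List.length_nil, Finset.prod_range_zero, Nat.cast_zero, Nat.sub_zero,
    mul_zero, sub_zero, one_mul]
  -- now a pure real-number identity
  set Pk : ℝ := ∏ t ∈ Finset.range k, ((N : ℝ) - k - t) with hPk
  set Q : ℝ := ∏ t ∈ Finset.range (m - k), ((N : ℝ) - 2 * k - 1 - 2 * t) with hQ
  set R : ℝ := ∏ t ∈ Finset.range (m - k), ((N : ℝ) - k - t) with hR
  set D : ℝ := ∏ t ∈ Finset.range k, ((N : ℝ) - t) with hD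
  set E : ℝ := ∏ t ∈ Finset.range k, ((N : ℝ) - 1 - 2 * t) with hE
  set F2 : ℝ := ∏ t ∈ Finset.range k, ((N : ℝ) - 2 * t) with hF2
  have hmk : m = k + (m - k) := by clear * - hkm; omega
  have hsplitE : (∏ x ∈ Finset.range m, ((N : ℝ) - 1 - 2 * x)) = E * Q := by
    rw [hmk, Finset.prod_range_add, hE, hQ]
    congr 1
    exact Finset.prod_congr rfl fun t _ => by push_cast; ring
  have hsplitD : (∏ x ∈ Finset.range m, ((N : ℝ) - x)) = D * R := by
    rw [hmk, Finset.prod_range_add, hD, hR]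
    congr 1
    exact Finset.prod_congr rfl fun t _ => by push_cast; ring
  have hrhs1 : (∏ t ∈ Finset.range k, 1 / ((N : ℝ) - t)) = 1 / D := by
    rw [hD, show (∏ t ∈ Finset.range k, 1 / ((N : ℝ) - t)) =
      (∏ t ∈ Finset.range k, (1 : ℝ)) / (∏ t ∈ Finset.range k, ((N : ℝ) - t)) from
      Finset.prod_div_distrib _ _]
    simp
  have hrhs2 : (∏ t ∈ Finset.range k, ((N : ℝ) - 2 * t) / ((N : ℝ) - t)) = F2 / D := by
    rw [hF2, hD]
    exact Finset.prod_div_distrib _ _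
  have hkey : Pk * D = F2 * E := by
    have h1 : (∏ t ∈ Finset.range (2 * k), ((N : ℝ) - t)) = D * Pk := by
      rw [two_mul, Finset.prod_range_add, hD, hPk]
      congr 1
      exact Finset.prod_congr rfl fun t _ => by push_cast; ring
    have h2 := prod_double k (N : ℝ)
    rw [h2] at h1
    linarith [h1]
  have hkN : 2 * k ≤ N := by clear * - hkm hm; omega
  have hDne : D ≠ 0 := by
    rw [hD]
    apply Finset.prod_ne_zero_iff.mpr
    intro t ht
    rw [Finset.mem_range] at ht
    have : (t : ℝ) < N := by
      have : t < N := by clear * - ht hkm hm; omega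
      exact_mod_cast this
    intro heq
    linarith
  have hEne : E ≠ 0 := by
    rw [hE]
    apply Finset.prod_ne_zero_iff.mpr
    intro t ht
    rw [Finset.mem_range] at ht
    have : (2 * t + 1 : ℕ) < N := by clear * - ht hkm hm; omega
    have : (2 * t + 1 : ℝ) < N := by exact_mod_cast this
    intro heq
    linarith
  have hQne : Q ≠ 0 := by
    rw [hQ]
    apply Finset.prod_ne_zero_iff.mpr
    intro t ht
    rw [Finset.mem_range] at ht
    have : (2 * k + 1 + 2 * t : ℕ) < N := by clear * - ht hkm hm; omega
    have : (2 * k + 1 + 2 * t : ℝ) < N := by exact_mod_cast this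
    intro heq
    linarith
  have hRne : R ≠ 0 := by
    rw [hR]
    apply Finset.prod_ne_zero_iff.mpr
    intro t ht
    rw [Finset.mem_range] at ht
    have : (k + t : ℕ) < N := by clear * - ht hkm hm; omega
    have : (k + t : ℝ) < N := by exact_mod_cast this
    intro heq
    linarith
  rw [hsplitE, hsplitD, hrhs1, hrhs2]
  field_simp
  linear_combination hkey
end

section
/- The probability under the uniform distribution on 2-to-1 functions that f takes prescribed distinct values at k distinct prescribed points is at least (1 − k²/(N−k)) times the corresponding probability under the uniform distribution on permutations of [N]. -/
open Finset

instance {N : ℕ} : DecidablePred (@TwoToOne N) := fun f => by unfold TwoToOne; infer_instance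

lemma twoToOne_comp_left {N : ℕ} (τ : Equiv.Perm (Fin N)) {f : Fin N → Fin N}
    (hf : TwoToOne f) : TwoToOne (⇑τ ∘ f) := by
  intro z hz
  obtain ⟨x, hx⟩ := hz
  have h1 : (univ.filter fun w => (⇑τ ∘ f) w = z) = univ.filter fun w => f w = τ.symm z := by
    ext w
    simp [Function.comp, Equiv.eq_symm_apply]
  rw [h1]
  exact hf _ ⟨x, (Equiv.eq_symm_apply τ).mpr hx⟩

lemma twoToOne_comp_left_iff {N : ℕ} (τ : Equiv.Perm (Fin N)) {f : Fin N → Fin N} :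
    TwoToOne (⇑τ ∘ f) ↔ TwoToOne f := by
  constructor
  · intro h
    have h2 := twoToOne_comp_left τ.symm h
    have : ⇑τ.symm ∘ (⇑τ ∘ f) = f := by ext x; simp
    rwa [this] at h2
  · exact twoToOne_comp_left τ

lemma twoToOne_comp_right {N : ℕ} (τ : Equiv.Perm (Fin N)) {f : Fin N → Fin N}
    (hf : TwoToOne f) : TwoToOne (f ∘ ⇑τ) := by
  intro z hz
  obtain ⟨x, hx⟩ := hz
  have h1 : (univ.filter fun w => (f ∘ ⇑τ) w = z)
      = (univ.filter fun w => f w = z).image ⇑τ.symm := by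
    ext w
    simp only [mem_filter, mem_univ, true_and, mem_image, Function.comp]
    constructor
    · intro h; exact ⟨τ w, ⟨h, by simp⟩⟩
    · rintro ⟨v, hv, rfl⟩; simpa
  rw [h1, Finset.card_image_of_injective _ τ.symm.injective]
  exact hf z ⟨τ x, hx⟩

lemma twoToOne_comp_right_iff {N : ℕ} (τ : Equiv.Perm (Fin N)) {f : Fin N → Fin N} :
    TwoToOne (f ∘ ⇑τ) ↔ TwoToOne f := by
  constructor
  · intro h
    have h2 := twoToOne_comp_right τ.symm h
    have : (f ∘ ⇑τ) ∘ ⇑τ.symm = f := by ext x; simp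
    rwa [this] at h2
  · exact twoToOne_comp_right τ

lemma exists_perm_comp {N k : ℕ} {u v : Fin k → Fin N} (hu : Function.Injective u)
    (hv : Function.Injective v) : ∃ τ : Equiv.Perm (Fin N), ∀ j, τ (u j) = v j := by
  classical
  have hcr : ∀ (w : Fin k → Fin N), Function.Injective w →
      Fintype.card {x : Fin N // x ∈ Set.range w} = k := by
    intro w hw
    rw [Fintype.card_congr (Equiv.ofInjective w hw).symm, Fintype.card_fin]
  have hc : Fintype.card {x : Fin N // ¬ x ∈ Set.range u}
      = Fintype.card {x : Fin N // ¬ x ∈ Set.range v} := by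
    rw [Fintype.card_subtype_compl, Fintype.card_subtype_compl, hcr u hu, hcr v hv]
  let e : {x : Fin N // x ∈ Set.range u} ≃ {x : Fin N // x ∈ Set.range v} :=
    (Equiv.ofInjective u hu).symm.trans (Equiv.ofInjective v hv)
  let ec := Fintype.equivOfCardEq hc
  refine ⟨Equiv.subtypeCongr e ec, fun j => ?_⟩
  have hj : u j ∈ Set.range u := ⟨j, rfl⟩
  simp only [Equiv.subtypeCongr, Equiv.trans_apply, Equiv.sumCompl_symm_apply_of_pos hj,
    Equiv.sumCongr_apply, Sum.map_inl, Equiv.sumCompl_apply_inl]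
  show (e ⟨u j, hj⟩ : Fin N) = v j
  have : (⟨u j, hj⟩ : {x : Fin N // x ∈ Set.range u}) = Equiv.ofInjective u hu j := rfl
  rw [this]
  simp [e]

lemma exists_twoToOne (N : ℕ) (hE : Even N) : ∃ f : Fin N → Fin N, TwoToOne f := by
  obtain ⟨m, rfl⟩ := hE
  refine ⟨fun x => ⟨2 * (x.val / 2), by omega⟩, ?_⟩
  intro z hz
  obtain ⟨x, hx⟩ := hz
  have hz2 : z.val = 2 * (x.val / 2) := by rw [← hx]
  have hzlt : z.val + 1 < m + m := by omega
  have hfe : (univ.filter fun w : Fin (m + m) => (⟨2 * (w.val / 2), by omega⟩ : Fin (m+m)) = z)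
      = {(⟨z.val, by omega⟩ : Fin (m+m)), ⟨z.val + 1, hzlt⟩} := by
    ext w
    simp only [mem_filter, mem_univ, true_and, mem_insert, mem_singleton, Fin.ext_iff]
    omega
  rw [hfe, Finset.card_insert_of_notMem (by simp [Fin.ext_iff]), Finset.card_singleton]

lemma perm_count {N k : ℕ} (i : Fin k → Fin N) (hi : Function.Injective i)
    (y : Fin k → Fin N) (hy : Function.Injective y) :
    Fintype.card {σ : Equiv.Perm (Fin N) // ∀ j, σ (i j) = y j} * N.descFactorial k
      = N.factorial := by
  classical
  let Φ : Equiv.Perm (Fin N) → (Fin k ↪ Fin N) := fun σ => ⟨fun j => σ (i j), σ.injective.comp hi⟩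
  have hfib : ∀ e : Fin k ↪ Fin N, Fintype.card {σ // Φ σ = e}
      = Fintype.card {σ : Equiv.Perm (Fin N) // ∀ j, σ (i j) = y j} := by
    intro e
    obtain ⟨τ, hτ⟩ := exists_perm_comp hy e.injective
    have E1 : {σ // Φ σ = e} ≃ {σ : Equiv.Perm (Fin N) // ∀ j, σ (i j) = e j} :=
      Equiv.subtypeEquivRight (fun σ => by rw [DFunLike.ext_iff]; rfl)
    have E2 : {σ : Equiv.Perm (Fin N) // ∀ j, σ (i j) = y j}
        ≃ {σ : Equiv.Perm (Fin N) // ∀ j, σ (i j) = e j} :=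
      Equiv.subtypeEquiv (Equiv.mulLeft τ) (fun σ => forall_congr' fun j => by
        show σ (i j) = y j ↔ τ (σ (i j)) = e j
        rw [← hτ j]
        exact (Equiv.apply_eq_iff_eq τ).symm)
    exact Fintype.card_congr (E1.trans E2.symm)
  have h1 : N.factorial = ∑ e : Fin k ↪ Fin N, Fintype.card {σ // Φ σ = e} := by
    rw [← Fintype.card_sigma, Fintype.card_congr (Equiv.sigmaFiberEquiv Φ), Fintype.card_perm,
      Fintype.card_fin]
  rw [h1, Finset.sum_congr rfl (fun e _ => hfib e), Finset.sum_const, smul_eq_mul,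
    Finset.card_univ, Fintype.card_embedding_eq, Fintype.card_fin, Fintype.card_fin, Nat.mul_comm]

lemma two_count {N k : ℕ} (i : Fin k → Fin N) (hi : Function.Injective i)
    (y : Fin k → Fin N) (hy : Function.Injective y) :
    Fintype.card {f : Fin N → Fin N // TwoToOne f ∧ ∀ j, f (i j) = y j} * N.descFactorial k
      = Fintype.card {f : Fin N → Fin N // TwoToOne f ∧ Function.Injective (f ∘ i)} := by
  classical
  let Φ : {f : Fin N → Fin N // TwoToOne f ∧ Function.Injective (f ∘ i)} → (Fin k ↪ Fin N) :=
    fun g => ⟨g.1 ∘ i, g.2.2⟩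
  have hfib : ∀ e : Fin k ↪ Fin N, Fintype.card {g // Φ g = e}
      = Fintype.card {f : Fin N → Fin N // TwoToOne f ∧ ∀ j, f (i j) = y j} := by
    intro e
    obtain ⟨τ, hτ⟩ := exists_perm_comp hy e.injective
    have E1 : {g // Φ g = e} ≃ {f : Fin N → Fin N // TwoToOne f ∧ ∀ j, f (i j) = e j} :=
      { toFun := fun g => ⟨g.1.1, g.1.2.1, fun j => congrArg (fun h : Fin k ↪ Fin N => h j) g.2⟩
        invFun := fun f => ⟨⟨f.1, f.2.1, by
          have hfe : f.1 ∘ i = ⇑e := funext f.2.2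
          rw [hfe]; exact e.injective⟩, DFunLike.ext _ _ (fun j => f.2.2 j)⟩
        left_inv := fun g => rfl
        right_inv := fun f => rfl }
    have E2 : {f : Fin N → Fin N // TwoToOne f ∧ ∀ j, f (i j) = y j}
        ≃ {f : Fin N → Fin N // TwoToOne f ∧ ∀ j, f (i j) = e j} := by
      refine Equiv.subtypeEquiv (Equiv.arrowCongr (Equiv.refl (Fin N)) τ) (fun f => ?_)
      have hco : (Equiv.arrowCongr (Equiv.refl (Fin N)) τ) f = ⇑τ ∘ f := funext fun x => rfl
      rw [hco, twoToOne_comp_left_iff]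
      refine and_congr Iff.rfl (forall_congr' fun j => ?_)
      show f (i j) = y j ↔ τ (f (i j)) = e j
      rw [← hτ j]
      exact (Equiv.apply_eq_iff_eq τ).symm
    exact Fintype.card_congr (E1.trans E2.symm)
  have h1 : Fintype.card {f : Fin N → Fin N // TwoToOne f ∧ Function.Injective (f ∘ i)}
      = ∑ e : Fin k ↪ Fin N, Fintype.card {g // Φ g = e} := by
    rw [← Fintype.card_sigma]
    exact Fintype.card_congr (Equiv.sigmaFiberEquiv Φ).symm
  rw [h1, Finset.sum_congr rfl (fun e _ => hfib e), Finset.sum_const, smul_eq_mul,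
    Finset.card_univ, Fintype.card_embedding_eq, Fintype.card_fin, Fintype.card_fin, Nat.mul_comm]

lemma pair_count {N : ℕ} (a b : Fin N) (hab : a ≠ b) :
    Fintype.card {f : Fin N → Fin N // TwoToOne f ∧ f b = f a} * (N - 1)
      = Fintype.card {f : Fin N → Fin N // TwoToOne f} := by
  classical
  have hcard1 : ∀ g : {f : Fin N → Fin N // TwoToOne f},
      ((univ.filter fun x => g.1 x = g.1 a).erase a).card = 1 := by
    intro g
    have h2 : (univ.filter fun x => g.1 x = g.1 a).card = 2 := g.2 _ ⟨a, rfl⟩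
    have ha : a ∈ univ.filter fun x => g.1 x = g.1 a := by simp
    rw [Finset.card_erase_of_mem ha, h2]
  let Φ : {f : Fin N → Fin N // TwoToOne f} → {c : Fin N // c ≠ a} := fun g =>
    ⟨((univ.filter fun x => g.1 x = g.1 a).erase a).min'
        (Finset.card_pos.mp (by rw [hcard1 g]; norm_num)),
     (Finset.mem_erase.mp (Finset.min'_mem _ _)).1⟩
  have hkey : ∀ (g : {f : Fin N → Fin N // TwoToOne f}) (c : Fin N) (hc : c ≠ a),
      (Φ g = ⟨c, hc⟩ ↔ g.1 c = g.1 a) := by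
    intro g c hc
    constructor
    · intro h
      have hne : ((univ.filter fun x => g.1 x = g.1 a).erase a).Nonempty :=
        Finset.card_pos.mp (by rw [hcard1 g]; norm_num)
      have hm : (Φ g).1 ∈ (univ.filter fun x => g.1 x = g.1 a).erase a := Finset.min'_mem _ hne
      have h2 := (Finset.mem_filter.mp (Finset.mem_of_mem_erase hm)).2
      rwa [show (Φ g).1 = c from congrArg Subtype.val h] at h2
    · intro h
      obtain ⟨d, hd⟩ := Finset.card_eq_one.mp (hcard1 g)
      have hcm : c ∈ (univ.filter fun x => g.1 x = g.1 a).erase a :=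
        Finset.mem_erase.mpr ⟨hc, by simp [h]⟩
      have hne : ((univ.filter fun x => g.1 x = g.1 a).erase a).Nonempty :=
        Finset.card_pos.mp (by rw [hcard1 g]; norm_num)
      have hm : (Φ g).1 ∈ (univ.filter fun x => g.1 x = g.1 a).erase a := Finset.min'_mem _ hne
      rw [hd, Finset.mem_singleton] at hcm hm
      apply Subtype.ext
      rw [hm, ← hcm]
  have hfib : ∀ c : {c : Fin N // c ≠ a}, Fintype.card {g // Φ g = c}
      = Fintype.card {f : Fin N → Fin N // TwoToOne f ∧ f b = f a} := by
    intro c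
    have E1 : {g // Φ g = c} ≃ {f : Fin N → Fin N // TwoToOne f ∧ f c.1 = f a} :=
      { toFun := fun g => ⟨g.1.1, g.1.2, (hkey g.1 c.1 c.2).mp (by rw [g.2])⟩
        invFun := fun f => ⟨⟨f.1, f.2.1⟩, (hkey ⟨f.1, f.2.1⟩ c.1 c.2).mpr f.2.2⟩
        left_inv := fun g => rfl
        right_inv := fun f => rfl }
    have E2 : {f : Fin N → Fin N // TwoToOne f ∧ f b = f a}
        ≃ {f : Fin N → Fin N // TwoToOne f ∧ f c.1 = f a} := by
      refine Equiv.subtypeEquiv (Equiv.arrowCongr (Equiv.swap b c.1) (Equiv.refl (Fin N)))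
        (fun f => ?_)
      have hco : (Equiv.arrowCongr (Equiv.swap b c.1) (Equiv.refl (Fin N))) f
          = f ∘ ⇑(Equiv.swap b c.1) := by
        have : (Equiv.arrowCongr (Equiv.swap b c.1) (Equiv.refl (Fin N))) f
            = f ∘ ⇑(Equiv.swap b c.1).symm := funext fun x => rfl
        rw [this, Equiv.symm_swap]
      rw [hco, twoToOne_comp_right_iff]
      refine and_congr Iff.rfl ?_
      have h1 : (f ∘ ⇑(Equiv.swap b c.1)) c.1 = f b := by
        simp [Function.comp, Equiv.swap_apply_right]
      have h2 : (f ∘ ⇑(Equiv.swap b c.1)) a = f a := by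
        show f ((Equiv.swap b c.1) a) = f a
        rw [Equiv.swap_apply_of_ne_of_ne hab (Ne.symm c.2)]
      rw [h1, h2]
    exact (Fintype.card_congr (E1.trans E2.symm))
  have h1 : Fintype.card {f : Fin N → Fin N // TwoToOne f}
      = ∑ c : {c : Fin N // c ≠ a}, Fintype.card {g // Φ g = c} := by
    rw [← Fintype.card_sigma]
    exact Fintype.card_congr (Equiv.sigmaFiberEquiv Φ).symm
  have hcne : Fintype.card {c : Fin N // c ≠ a} = N - 1 := by
    have h := (Fintype.card_subtype_compl (fun c : Fin N => c = a))
    rw [Fintype.card_subtype_eq, Fintype.card_fin] at h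
    convert h using 2
  rw [h1, Finset.sum_congr rfl (fun c _ => hfib c), Finset.sum_const, smul_eq_mul,
    Finset.card_univ, hcne, Nat.mul_comm]

theorem stmt5 (N k : ℕ) (hN : 0 < N) (hEven : Even N) (hk : k < N / 2)
    (i : Fin k → Fin N) (hi : Function.Injective i)
    (y : Fin k → Fin N) (hy : Function.Injective y) :
    (1 - (k : ℝ) ^ 2 / ((N : ℝ) - k)) *
        ((Nat.card {σ : Equiv.Perm (Fin N) // ∀ j, σ (i j) = y j} : ℝ) /
          (Nat.card (Equiv.Perm (Fin N)) : ℝ)) ≤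
      (Nat.card {f : Fin N → Fin N // TwoToOne f ∧ ∀ j, f (i j) = y j} : ℝ) /
        (Nat.card {f : Fin N → Fin N // TwoToOne f} : ℝ) := by
  classical
  have hkN : k < N := lt_of_lt_of_le hk (Nat.div_le_self N 2)
  have hN2 : 2 ≤ N := by
    obtain ⟨m, rfl⟩ := hEven; omega
  simp only [Nat.card_eq_fintype_card]
  rw [Fintype.card_perm, Fintype.card_fin]
  set P := Fintype.card {σ : Equiv.Perm (Fin N) // ∀ j, σ (i j) = y j} with hP
  set Ak := Fintype.card {f : Fin N → Fin N // TwoToOne f ∧ ∀ j, f (i j) = y j} with hAk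
  set A0 := Fintype.card {f : Fin N → Fin N // TwoToOne f} with hA0def
  set Gc := Fintype.card {f : Fin N → Fin N // TwoToOne f ∧ Function.Injective (f ∘ i)} with hGc
  set Bad := Fintype.card {f : Fin N → Fin N // TwoToOne f ∧ ¬ Function.Injective (f ∘ i)}
    with hBad
  set d := N.descFactorial k with hd
  clear_value P Ak A0 Gc Bad d
  -- partition
  have hpart : Gc + Bad = A0 := by
    rw [hGc, hBad, hA0def, Fintype.card_subtype, Fintype.card_subtype, Fintype.card_subtype,
      ← Finset.filter_filter, ← Finset.filter_filter]
    exact Finset.card_filter_add_card_filter_not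
      (p := fun f : Fin N → Fin N => Function.Injective (f ∘ i))
  -- bad bound
  have hbad : Bad * (N - 1) ≤ k * k * A0 := by
    have hb1 : Bad ≤ ∑ p ∈ (univ : Finset (Fin k)).offDiag,
        (univ.filter fun f : Fin N → Fin N => TwoToOne f ∧ f (i p.2) = f (i p.1)).card := by
      rw [hBad, Fintype.card_subtype]
      refine le_trans (Finset.card_le_card ?_) Finset.card_biUnion_le
      intro f hf
      simp only [mem_filter, mem_univ, true_and] at hf
      obtain ⟨h2, hinj⟩ := hf
      rw [Function.not_injective_iff] at hinj
      obtain ⟨j, j', hjj, hne⟩ := hinj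
      rw [Finset.mem_biUnion]
      refine ⟨(j, j'), Finset.mem_offDiag.mpr ⟨mem_univ _, mem_univ _, hne⟩, ?_⟩
      simp only [mem_filter, mem_univ, true_and]
      exact ⟨h2, hjj.symm⟩
    calc Bad * (N - 1)
        ≤ (∑ p ∈ (univ : Finset (Fin k)).offDiag,
            (univ.filter fun f : Fin N → Fin N => TwoToOne f ∧ f (i p.2) = f (i p.1)).card)
            * (N - 1) := Nat.mul_le_mul_right _ hb1
      _ = ∑ p ∈ (univ : Finset (Fin k)).offDiag,
            (univ.filter fun f : Fin N → Fin N => TwoToOne f ∧ f (i p.2) = f (i p.1)).card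
            * (N - 1) := Finset.sum_mul _ _ _
      _ = ∑ p ∈ (univ : Finset (Fin k)).offDiag, A0 := by
          refine Finset.sum_congr rfl (fun p hp => ?_)
          have hpne : p.1 ≠ p.2 := (Finset.mem_offDiag.mp hp).2.2
          have hine : i p.1 ≠ i p.2 := fun h => hpne (hi h)
          rw [hA0def, ← Fintype.card_subtype]
          exact pair_count (i p.1) (i p.2) hine
      _ = (univ : Finset (Fin k)).offDiag.card * A0 := by
          rw [Finset.sum_const, smul_eq_mul]
      _ ≤ k * k * A0 := by
          refine Nat.mul_le_mul_right _ ?_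
          rw [Finset.offDiag_card, Finset.card_univ, Fintype.card_fin]
          exact Nat.sub_le _ _
  have hbadN : Bad * (N - k) ≤ k ^ 2 * A0 := by
    rcases Nat.eq_zero_or_pos k with hk0 | hk1
    · subst hk0
      simp only [Nat.mul_zero, Nat.zero_mul] at hbad ⊢
      have : Bad = 0 := by
        by_contra hB
        have : 0 < Bad * (N - 1) := Nat.mul_pos (Nat.pos_of_ne_zero hB)
          (Nat.sub_pos_of_lt (lt_of_lt_of_le Nat.one_lt_two hN2))
        exact absurd hbad (not_le.mpr this)
      simp [this]
    · calc Bad * (N - k) ≤ Bad * (N - 1) :=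
            Nat.mul_le_mul_left _ (Nat.sub_le_sub_left hk1 N)
        _ ≤ k * k * A0 := hbad
        _ = k ^ 2 * A0 := by ring
  -- positivity
  obtain ⟨f0, hf0⟩ := exists_twoToOne N hEven
  have hA0 : 0 < A0 := by
    rw [hA0def]; exact Fintype.card_pos_iff.mpr ⟨⟨f0, hf0⟩⟩
  have hperm := perm_count i hi y hy
  have htwo := two_count i hi y hy
  rw [← hP, ← hd] at hperm
  rw [← hAk, ← hd, ← hGc] at htwo
  have hNf : 0 < N.factorial := Nat.factorial_pos N
  have hdpos : 0 < d := by
    rw [hd]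
    exact Nat.pos_of_ne_zero fun h => Nat.lt_asymm hkN (Nat.descFactorial_eq_zero_iff_lt.mp h)
  have hPpos : 0 < P := by
    rcases Nat.eq_zero_or_pos P with h0 | h1
    · rw [h0, Nat.zero_mul] at hperm
      exact absurd hperm.symm (Nat.factorial_ne_zero N)
    · exact h1
  -- real facts
  have hNkR : (0:ℝ) < (N:ℝ) - k := by
    have : (k:ℝ) < N := by exact_mod_cast hkN
    linarith
  have hA0R : (0:ℝ) < (A0:ℝ) := by exact_mod_cast hA0
  have hNfR : (0:ℝ) < (N.factorial:ℝ) := by exact_mod_cast hNf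
  have key : (1 - (k:ℝ)^2/((N:ℝ)-k)) * (A0:ℝ) ≤ (Gc:ℝ) := by
    have hcast : ((N:ℝ) - k) = ((N - k : ℕ) : ℝ) := by
      rw [Nat.cast_sub (le_of_lt hkN)]
    have hb : (Bad:ℝ) * ((N:ℝ) - k) ≤ (k:ℝ)^2 * (A0:ℝ) := by
      rw [hcast]
      exact_mod_cast hbadN
    have hGceq : (Gc:ℝ) = (A0:ℝ) - (Bad:ℝ) := by
      have : (Gc:ℝ) + (Bad:ℝ) = (A0:ℝ) := by exact_mod_cast hpart
      linarith
    rw [hGceq, sub_mul, one_mul]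
    have h3 : (Bad:ℝ) ≤ ((k:ℝ)^2 * (A0:ℝ))/((N:ℝ)-k) := (le_div_iff₀ hNkR).mpr hb
    have h4 : (k:ℝ)^2/((N:ℝ)-k) * (A0:ℝ) = ((k:ℝ)^2 * (A0:ℝ))/((N:ℝ)-k) := by ring
    linarith
  have hAkF : (Ak:ℝ) * (N.factorial:ℝ) = (Gc:ℝ) * (P:ℝ) := by
    have h1 : (P:ℝ) * (d:ℝ) = (N.factorial:ℝ) := by exact_mod_cast hperm
    have h2 : (Ak:ℝ) * (d:ℝ) = (Gc:ℝ) := by exact_mod_cast htwo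
    calc (Ak:ℝ) * (N.factorial:ℝ) = ((Ak:ℝ) * d) * P := by rw [← h1]; ring
      _ = (Gc:ℝ) * P := by rw [h2]
  rw [show (1 - (k:ℝ)^2/((N:ℝ)-k)) * ((P:ℝ)/(N.factorial:ℝ))
      = ((1 - (k:ℝ)^2/((N:ℝ)-k)) * P)/(N.factorial:ℝ) from by ring]
  rw [div_le_div_iff₀ hNfR hA0R]
  calc (1 - (k:ℝ)^2/((N:ℝ)-k)) * (P:ℝ) * (A0:ℝ)
      = ((1 - (k:ℝ)^2/((N:ℝ)-k)) * (A0:ℝ)) * (P:ℝ) := by ring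
    _ ≤ (Gc:ℝ) * (P:ℝ) := mul_le_mul_of_nonneg_right key (by positivity)
    _ = (Ak:ℝ) * (N.factorial:ℝ) := hAkF.symm
end

section
/- Let f be a partial Boolean function on D ⊆ {0,1}^M, and suppose there exist distributions D₀ and D₁ supported on the 0-inputs and 1-inputs of f respectively, which are ε-almost k-wise equivalent with ε < 1/3. Then there is no pair of nonnegative functions (a, s) such that a and s are each nonnegative linear combinations of k-terms, s(x) > 0 on D, a(x)/s(x) ≥ 2/3 whenever f(x)=1, and a(x)/s(x) ≤ 1/3 whenever f(x)=0. -/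
/-- `p` is a probability distribution on a finite type. -/
def IsProb {α : Type} [Fintype α] (p : α → ℝ) : Prop :=
  (∀ x, 0 ≤ p x) ∧ ∑ x, p x = 1

/-- The probability under `D` of the term prescribing value `v i` to
coordinate `i` for every `i ∈ T`. -/
def TermProb (M : ℕ) (D : (Fin M → Bool) → ℝ) (T : Finset (Fin M)) (v : Fin M → Bool) : ℝ :=
  ∑ x ∈ Finset.univ.filter (fun x : Fin M → Bool => ∀ i ∈ T, x i = v i), D x

/-- `a` is a nonnegative linear combination of terms with at most `k` literals each. -/
def IsKTermComb (M k : ℕ) (a : (Fin M → Bool) → ℝ) : Prop :=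
  ∃ (m : ℕ) (c : Fin m → ℝ) (T : Fin m → Finset (Fin M)) (v : Fin m → Fin M → Bool),
    (∀ j, 0 ≤ c j) ∧ (∀ j, (T j).card ≤ k) ∧
      ∀ x, a x = ∑ j, c j * (if ∀ i ∈ T j, x i = v j i then (1 : ℝ) else 0)

lemma exp_eq (M m : ℕ) (D : (Fin M → Bool) → ℝ) (c : Fin m → ℝ)
    (T : Fin m → Finset (Fin M)) (v : Fin m → Fin M → Bool) :
    ∑ x, D x * (∑ j, c j * (if ∀ i ∈ T j, x i = v j i then (1 : ℝ) else 0)) =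
      ∑ j, c j * TermProb M D (T j) (v j) := by
  simp only [Finset.mul_sum]
  rw [Finset.sum_comm]
  refine Finset.sum_congr rfl fun j _ => ?_
  rw [TermProb, Finset.sum_filter, Finset.mul_sum]
  refine Finset.sum_congr rfl fun x _ => ?_
  by_cases h : ∀ i ∈ T j, x i = v j i <;> simp [h] <;> ring

lemma nonneg_of_comb {M k : ℕ} {a : (Fin M → Bool) → ℝ} (ha : IsKTermComb M k a) :
    ∀ x, 0 ≤ a x := by
  obtain ⟨m, c, T, v, hc, hT, heq⟩ := ha
  intro x
  rw [heq]
  refine Finset.sum_nonneg fun j _ => mul_nonneg (hc j) (by positivity)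

theorem stmt9 (M k : ℕ) (ε : ℝ) (hε0 : 0 ≤ ε) (hε : ε < 1 / 3)
    (Dom : Set (Fin M → Bool)) (f : (Fin M → Bool) → Bool)
    (D₀ D₁ : (Fin M → Bool) → ℝ) (h₀ : IsProb D₀) (h₁ : IsProb D₁)
    (hsupp₀ : ∀ x, D₀ x ≠ 0 → x ∈ Dom ∧ f x = false)
    (hsupp₁ : ∀ x, D₁ x ≠ 0 → x ∈ Dom ∧ f x = true)
    (hequiv : ∀ (T : Finset (Fin M)) (v : Fin M → Bool), T.card ≤ k →
      (1 - ε) * TermProb M D₀ T v ≤ TermProb M D₁ T v ∧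
        TermProb M D₁ T v ≤ (1 + ε) * TermProb M D₀ T v) :
    ¬ ∃ a s : (Fin M → Bool) → ℝ, IsKTermComb M k a ∧ IsKTermComb M k s ∧
      (∀ x ∈ Dom, 0 < s x) ∧
      (∀ x ∈ Dom, f x = true → 2 / 3 ≤ a x / s x) ∧
      (∀ x ∈ Dom, f x = false → a x / s x ≤ 1 / 3) := by
  rintro ⟨a, s, ha, hs, hspos, h1, h0⟩
  -- expectations
  set E₀a := ∑ x, D₀ x * a x with hE₀a
  set E₀s := ∑ x, D₀ x * s x with hE₀s
  set E₁a := ∑ x, D₁ x * a x with hE₁a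
  set E₁s := ∑ x, D₁ x * s x with hE₁s
  have key : ∀ g : (Fin M → Bool) → ℝ, IsKTermComb M k g →
      (1 - ε) * ∑ x, D₀ x * g x ≤ ∑ x, D₁ x * g x ∧
        ∑ x, D₁ x * g x ≤ (1 + ε) * ∑ x, D₀ x * g x := by
    rintro g ⟨m, c, T, v, hc, hT, heq⟩
    have e0 : ∑ x, D₀ x * g x = ∑ j, c j * TermProb M D₀ (T j) (v j) := by
      simp only [heq]; exact exp_eq M m D₀ c T v
    have e1 : ∑ x, D₁ x * g x = ∑ j, c j * TermProb M D₁ (T j) (v j) := by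
      simp only [heq]; exact exp_eq M m D₁ c T v
    rw [e0, e1, Finset.mul_sum, Finset.mul_sum]
    constructor
    · refine Finset.sum_le_sum fun j _ => ?_
      have := (hequiv (T j) (v j) (hT j)).1
      calc (1 - ε) * (c j * TermProb M D₀ (T j) (v j))
          = c j * ((1 - ε) * TermProb M D₀ (T j) (v j)) := by ring
        _ ≤ c j * TermProb M D₁ (T j) (v j) := mul_le_mul_of_nonneg_left this (hc j)
    · refine Finset.sum_le_sum fun j _ => ?_
      have := (hequiv (T j) (v j) (hT j)).2
      calc c j * TermProb M D₁ (T j) (v j)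
          ≤ c j * ((1 + ε) * TermProb M D₀ (T j) (v j)) := mul_le_mul_of_nonneg_left this (hc j)
        _ = (1 + ε) * (c j * TermProb M D₀ (T j) (v j)) := by ring
  -- E₀s > 0
  have hE0spos : 0 < E₀s := by
    obtain ⟨x₀, hx₀⟩ : ∃ x, D₀ x ≠ 0 := by
      by_contra h
      push_neg at h
      have := h₀.2
      simp only [h] at this
      simp at this
    have hx₀Dom := (hsupp₀ x₀ hx₀).1
    have : 0 < D₀ x₀ * s x₀ :=
      mul_pos (lt_of_le_of_ne (h₀.1 x₀) (Ne.symm hx₀)) (hspos x₀ hx₀Dom)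
    refine lt_of_lt_of_le this ?_
    refine Finset.single_le_sum (f := fun x => D₀ x * s x) (fun x _ => ?_) (Finset.mem_univ x₀)
    exact mul_nonneg (h₀.1 x) (nonneg_of_comb hs x)
  -- pointwise on supports
  have hA0 : E₀a ≤ (1/3) * E₀s := by
    rw [hE₀a, hE₀s, Finset.mul_sum]
    refine Finset.sum_le_sum fun x _ => ?_
    by_cases hx : D₀ x = 0
    · simp [hx]
    · obtain ⟨hxD, hxf⟩ := hsupp₀ x hx
      have hsx := hspos x hxD
      have := h0 x hxD hxf
      have hax : a x ≤ (1/3) * s x := by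
        rw [div_le_iff₀ hsx] at this; linarith
      calc D₀ x * a x ≤ D₀ x * ((1/3) * s x) :=
            mul_le_mul_of_nonneg_left hax (h₀.1 x)
        _ = 1/3 * (D₀ x * s x) := by ring
  have hA1 : (2/3) * E₁s ≤ E₁a := by
    rw [hE₁a, hE₁s, Finset.mul_sum]
    refine Finset.sum_le_sum fun x _ => ?_
    by_cases hx : D₁ x = 0
    · simp [hx]
    · obtain ⟨hxD, hxf⟩ := hsupp₁ x hx
      have hsx := hspos x hxD
      have := h1 x hxD hxf
      have hax : (2/3) * s x ≤ a x := by
        rw [le_div_iff₀ hsx] at this; linarith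
      calc 2/3 * (D₁ x * s x) = D₁ x * ((2/3) * s x) := by ring
        _ ≤ D₁ x * a x := mul_le_mul_of_nonneg_left hax (h₁.1 x)
  have hka := key a ha
  have hks := key s hs
  -- chain
  have chain : (2/3) * ((1 - ε) * E₀s) ≤ (1 + ε) * ((1/3) * E₀s) := by
    calc (2/3) * ((1 - ε) * E₀s) ≤ (2/3) * E₁s := by
          have := hks.1
          nlinarith
      _ ≤ E₁a := hA1
      _ ≤ (1 + ε) * E₀a := hka.2
      _ ≤ (1 + ε) * ((1/3) * E₀s) := by nlinarith [hka.2]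
  nlinarith [chain, hE0spos]
end
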